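/- Let w = W₀(-(2x₁₀+x₂₀)e^{-(y₁₀+2x₁₀+x₂₀)}) where W₀ is the principal branch of the Lambert W function, and set x₁∞ = -x₁₀·w/(2x₁₀+x₂₀), x₂∞ = -x₂₀·w/(2x₁₀+x₂₀). Then with λ = α and p = 1, x₂∞ is a root of f, i.e., y₁₀ + 2x₁₀(1 - x₂∞/x₂₀) + (x₂₀ - x₂∞) + ln(x₂∞/x₂₀) = 0, and x₁∞ = x₁₀·(x₂∞/x₂₀). -/

import Mathlib

theorem lambert_root
    (x10 x20 y10 : ℝ)
    (hx10 : 0 < x10) (hx20 : 0 < x20) (hy10 : 0 ≤ y10)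
    (hsum : x10 + x20 + y10 = 1)
    (w : ℝ)
    (hw_principal : -1 ≤ w)
    (hw : w * Real.exp w = -(2 * x10 + x20) * Real.exp (-(y10 + 2 * x10 + x20)))
    (x1inf x2inf : ℝ)
    (hx1inf : x1inf = -x10 * w / (2 * x10 + x20))
    (hx2inf : x2inf = -x20 * w / (2 * x10 + x20)) :
    y10 + 2 * x10 * (1 - x2inf / x20) + (x20 - x2inf) + Real.log (x2inf / x20) = 0 ∧
    x1inf = x10 * (x2inf / x20) := by
  set c : ℝ := 2 * x10 + x20 with hc_def
  have hc : 0 < c := by positivity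
  have hwneg : w < 0 := by
    nlinarith [Real.exp_pos w, Real.exp_pos (-(y10 + 2 * x10 + x20)),
      mul_pos hc (Real.exp_pos (-(y10 + 2 * x10 + x20)))]
  set t : ℝ := -w / c with ht_def
  have ht : 0 < t := by
    apply div_pos (by linarith) hc
  have hwt : w = -(c * t) := by
    rw [ht_def, mul_div_assoc', mul_comm, mul_div_assoc, div_self (ne_of_gt hc), mul_one, neg_neg]
  have h1 : t * Real.exp (-(c * t)) = Real.exp (-(y10 + c)) := by
    have he : -(y10 + 2 * x10 + x20) = -(y10 + c) := by rw [hc_def]; ring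
    rw [hwt, he] at hw
    have hc' : c ≠ 0 := ne_of_gt hc
    nlinarith [hw]
  have hlog : Real.log t = c * t - c - y10 := by
    have := congrArg Real.log h1
    rw [Real.log_mul (ne_of_gt ht) (Real.exp_ne_zero _), Real.log_exp, Real.log_exp] at this
    linarith
  have hx2t : x2inf / x20 = t := by
    rw [hx2inf, ht_def]
    field_simp
  have hx2 : x2inf = x20 * t := by
    rw [← hx2t]; field_simp
  constructor
  · rw [hx2t, hlog, hx2, hc_def]
    ring
  · rw [hx1inf, hx2t, ht_def]
    field_simp
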